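/- For every rational t, there exists a unique pair of polynomials g, H in Q(t)[x] with g of degree 8 in x (monic) and H of degree at most 6 in x such that (x^2 - 15x + 4t) * prod_{i=1}^{14}(x - i) = g(t,x)^2 - H(t,x); moreover H has degree exactly 6 in x for all but finitely many t. -/

import Mathlib

open Polynomial

noncomputable def gp (t : ℚ) : Polynomial ℚ :=
  X^8 + C (-60) * X^7 + C (2*t + 1490) * X^6 + C (-90*t - 19800) * X^5 + C (-2*t^2 + 1630*t + 151761) * X^4 + C (60*t^2 - 15150*t - 671580) * X^3 + C (4*t^3 - 730*t^2 + 76272*t + 1609180) * X^2 + C (-60*t^3 + 4200*t^2 - 199080*t - 1741200) * X + C (-10*t^4 + 560*t^3 - 13272*t^2 + 232160*t + 430016)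

noncomputable def Hp (t : ℚ) : Polynomial ℚ :=
  C (-56*t^5 + 2800*t^4 - 53088*t^3 + 464320*t^2 - 1720064*t + 2088960) * X^6 + C (2520*t^5 - 126000*t^4 + 2388960*t^3 - 20894400*t^2 + 77402880*t - 94003200) * X^5 + C (56*t^6 - 47880*t^5 + 2308544*t^4 - 43266720*t^3 + 376700736*t^2 - 1393496320*t + 1694076928) * X^4 + C (-1680*t^6 + 491400*t^5 - 22006320*t^4 + 402141600*t^3 - 3465622080*t^2 + 12778809600*t - 15571107840) * X^3 + C (-80*t^7 + 22680*t^6 - 2953216*t^5 + 116005040*t^4 - 2021123840*t^3 + 17079484160*t^2 - 62580180992*t + 76560732160) * X^2 + C (1200*t^7 - 151200*t^6 + 10278240*t^5 - 327489600*t^4 + 5232777600*t^3 - 42606278400*t^2 + 154173434880*t - 189813350400) * X + C (100*t^8 - 11200*t^7 + 579040*t^6 - 19507840*t^5 + 427564864*t^4 - 5680837120*t^3 + 42483920896*t^2 - 149048135680*t + 184913760256)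

noncomputable def qq : Polynomial ℚ :=
  C (-56)*X^5 + C 2800*X^4 - C 53088*X^3 + C 464320*X^2 - C 1720064*X + C 2088960

lemma prod14 : (∏ i ∈ Finset.Icc (1:ℕ) 14, (X - C (i : ℚ))) =
    (X - C 1)*(X - C 2)*(X - C 3)*(X - C 4)*(X - C 5)*(X - C 6)*(X - C 7)*(X - C 8)*(X - C 9)*(X - C 10)*(X - C 11)*(X - C 12)*(X - C 13)*(X - C 14) := by
  rw [show (14:ℕ) = 13+1 from rfl, Finset.prod_Icc_succ_top (by norm_num),
      show (13:ℕ) = 12+1 from rfl, Finset.prod_Icc_succ_top (by norm_num),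
      show (12:ℕ) = 11+1 from rfl, Finset.prod_Icc_succ_top (by norm_num),
      show (11:ℕ) = 10+1 from rfl, Finset.prod_Icc_succ_top (by norm_num),
      show (10:ℕ) = 9+1 from rfl, Finset.prod_Icc_succ_top (by norm_num),
      show (9:ℕ) = 8+1 from rfl, Finset.prod_Icc_succ_top (by norm_num),
      show (8:ℕ) = 7+1 from rfl, Finset.prod_Icc_succ_top (by norm_num),
      show (7:ℕ) = 6+1 from rfl, Finset.prod_Icc_succ_top (by norm_num),
      show (6:ℕ) = 5+1 from rfl, Finset.prod_Icc_succ_top (by norm_num),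
      show (5:ℕ) = 4+1 from rfl, Finset.prod_Icc_succ_top (by norm_num),
      show (4:ℕ) = 3+1 from rfl, Finset.prod_Icc_succ_top (by norm_num),
      show (3:ℕ) = 2+1 from rfl, Finset.prod_Icc_succ_top (by norm_num),
      show (2:ℕ) = 1+1 from rfl, Finset.prod_Icc_succ_top (by norm_num),
      Finset.Icc_self, Finset.prod_singleton]
  norm_num

set_option maxHeartbeats 1000000 in
lemma key (t : ℚ) :
    (X^2 - C 15 * X + C (4*t)) * ∏ i ∈ Finset.Icc (1:ℕ) 14, (X - C (i : ℚ)) =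
      (gp t)^2 - Hp t := by
  rw [prod14]
  simp only [gp, Hp, map_add, map_sub, map_mul, map_neg, map_pow, map_ofNat, Polynomial.C_1]
  ring

lemma gp_monic (t : ℚ) : (gp t).Monic := by unfold gp; monicity!

lemma gp_deg (t : ℚ) : (gp t).degree = 8 := by unfold gp; compute_degree!

lemma Hp_deg (t : ℚ) : (Hp t).degree ≤ 6 := by unfold Hp; compute_degree

lemma Hp_coeff6 (t : ℚ) : (Hp t).coeff 6 = qq.eval t := by
  simp only [Hp, qq, coeff_add, coeff_C_mul, coeff_X_pow, coeff_C, coeff_X, eval_add, eval_sub,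
    eval_mul, eval_pow, eval_C, eval_X]
  norm_num

lemma uniq {g1 g2 H1 H2 : Polynomial ℚ} (m1 : g1.Monic) (d1 : g1.degree = 8)
    (m2 : g2.Monic) (d2 : g2.degree = 8) (e1 : H1.degree ≤ 6) (e2 : H2.degree ≤ 6)
    (h : g1^2 - H1 = g2^2 - H2) : g1 = g2 ∧ H1 = H2 := by
  have hg : g1 = g2 := by
    by_contra hne
    have hsub : g1 - g2 ≠ 0 := sub_ne_zero.mpr hne
    have hprod : (g1 - g2) * (g1 + g2) = H1 - H2 := by linear_combination h
    have n1 : g1.natDegree = 8 := natDegree_eq_of_degree_eq_some d1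
    have n2 : g2.natDegree = 8 := natDegree_eq_of_degree_eq_some d2
    have hd : (g1 + g2).degree = 8 := by
      apply le_antisymm
      · exact le_trans (degree_add_le _ _) (by rw [d1, d2]; exact le_refl _)
      · apply le_degree_of_ne_zero
        have : (g1 + g2).coeff 8 = 2 := by
          rw [coeff_add]
          have c1 : g1.coeff 8 = 1 := by rw [← n1]; exact m1
          have c2 : g2.coeff 8 = 1 := by rw [← n2]; exact m2
          rw [c1, c2]; norm_num
        rw [this]; norm_num
    have hle : (H1 - H2).degree ≤ 6 :=
      le_trans (degree_sub_le _ _) (max_le e1 e2)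
    have hgt : (6 : WithBot ℕ) < ((g1 - g2) * (g1 + g2)).degree := by
      rw [degree_mul, hd]
      have : (0 : WithBot ℕ) ≤ (g1 - g2).degree := zero_le_degree_iff.mpr hsub
      calc (6 : WithBot ℕ) < 0 + 8 := by norm_num
        _ ≤ (g1 - g2).degree + 8 := by exact add_le_add this le_rfl
    rw [hprod] at hgt
    exact absurd hle (not_le.mpr hgt)
  subst hg
  exact ⟨rfl, by linear_combination -h⟩

theorem unique_square_decomposition_deg6 :
    (∀ t : ℚ, ∃! p : Polynomial ℚ × Polynomial ℚ,
      p.1.Monic ∧ p.1.degree = 8 ∧ p.2.degree ≤ 6 ∧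
      (X^2 - C 15 * X + C (4*t)) * ∏ i ∈ Finset.Icc (1:ℕ) 14, (X - C (i : ℚ)) =
        p.1^2 - p.2) ∧
    {t : ℚ | ¬ ∀ g H : Polynomial ℚ,
      (g.Monic ∧ g.degree = 8 ∧ H.degree ≤ 6 ∧
        (X^2 - C 15 * X + C (4*t)) * ∏ i ∈ Finset.Icc (1:ℕ) 14, (X - C (i : ℚ)) =
          g^2 - H) → H.degree = 6}.Finite := by
  constructor
  · intro t
    refine ⟨(gp t, Hp t), ⟨gp_monic t, gp_deg t, Hp_deg t, key t⟩, ?_⟩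
    rintro ⟨g, H⟩ ⟨hm, hd, hH, he⟩
    have h2 := key t
    have := uniq hm hd (gp_monic t) (gp_deg t) hH (Hp_deg t) (by rw [← he, ← h2])
    exact Prod.ext this.1 this.2
  · have hq : qq ≠ 0 := by
      intro h
      have h5 : qq.coeff 5 = -56 := by
        simp only [qq, coeff_add, coeff_sub, coeff_C_mul, coeff_X_pow, coeff_C, coeff_X]
        norm_num
      rw [h] at h5; simp at h5
    apply Set.Finite.subset (Polynomial.finite_setOf_isRoot hq)
    intro t ht
    simp only [Set.mem_setOf_eq] at ht
    by_contra hroot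
    simp only [Set.mem_setOf_eq, IsRoot] at hroot
    apply ht
    rintro g H ⟨hm, hd, hH, he⟩
    have h2 := key t
    have huv := uniq hm hd (gp_monic t) (gp_deg t) hH (Hp_deg t) (by rw [← he, ← h2])
    rw [huv.2]
    apply le_antisymm (Hp_deg t)
    apply le_degree_of_ne_zero
    rw [Hp_coeff6 t]
    exact hroot
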